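/- Let x₁, …, xₙ be positive real numbers with maximum b, arithmetic mean A = (Σxᵢ)/n and geometric mean G = (Πxᵢ)^(1/n). Then A − G ≥ (1/(2b))·((Σxᵢ²)/n − A²), i.e., the AM-GM gap is at least the variance divided by twice the maximum. -/

import Mathlib

open Finset Real

lemma cf_hasDeriv (l c M : ℝ) {y : ℝ} (hy : y ≠ 0) :
    HasDerivAt (fun y : ℝ => l*y + (1-l)*c - y^l * c^(1-l) - l*(1-l)*((y-c)^2/(2*M)))
      (l - l * y^(l-1) * c^(1-l) - l*(1-l)*(2*(y-c)/(2*M))) y := by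
  have h1 : HasDerivAt (fun y : ℝ => l*y + (1-l)*c) l y := by
    simpa using ((hasDerivAt_id y).const_mul l).add_const ((1-l)*c)
  have h2 : HasDerivAt (fun y : ℝ => y^l * c^(1-l)) ((l * y^(l-1)) * c^(1-l)) y :=
    (Real.hasDerivAt_rpow_const (Or.inl hy)).mul_const _
  have h3 : HasDerivAt (fun y : ℝ => l*(1-l)*((y-c)^2/(2*M)))
      (l*(1-l)*((2*(y-c))/(2*M))) y := by
    have h : HasDerivAt (fun y : ℝ => (y-c)^2) (2*(y-c)) y := by
      simpa using ((hasDerivAt_id y).sub_const c).fun_pow 2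
    simpa using (h.div_const (2*M)).const_mul (l*(1-l))
  exact (h1.sub h2).sub h3

lemma cf_deriv_nonneg {M c l y : ℝ} (hc : 0 < c) (hl0 : 0 < l) (hl1' : l < 1)
    (hcy : c < y) (hyM : y ≤ M) :
    0 ≤ l - l * y ^ (l - 1) * c ^ (1 - l) - l * (1 - l) * (2 * (y - c) / (2 * M)) := by
  have hy0 : 0 < y := lt_trans hc hcy
  have hM : 0 < M := lt_of_lt_of_le hy0 hyM
  have e1 : (c/y)^(1-l) = y^(l-1) * c^(1-l) := by
    rw [Real.div_rpow hc.le hy0.le, div_eq_mul_inv, ← Real.rpow_neg hy0.le]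
    rw [show -(1-l) = l - 1 by ring]; ring
  have hber : (c/y)^(1-l) ≤ 1 + (1-l)*(c/y - 1) := by
    have h := rpow_one_add_le_one_add_mul_self (s := c/y - 1) (p := 1-l)
      (by have : 0 < c/y := div_pos hc hy0; linarith) (by linarith) (by linarith)
    simpa using h
  have hA : l * (y^(l-1) * c^(1-l)) ≤ l * (1 + (1-l)*(c/y - 1)) := by
    rw [← e1]; exact mul_le_mul_of_nonneg_left hber hl0.le
  have h1 : (y - c)/M ≤ (y - c)/y := by gcongr <;> linarith
  have hB : l*(1-l)*((y-c)/M) ≤ l*(1-l)*((y-c)/y) :=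
    mul_le_mul_of_nonneg_left h1 (by nlinarith)
  have e3 : l * (1 + (1-l)*(c/y - 1)) + l*(1-l)*((y-c)/y) = l := by
    field_simp; ring
  have e4 : 2 * (y - c) / (2 * M) = (y-c)/M := by
    rw [mul_div_mul_left _ _ (two_ne_zero)]
  rw [e4]
  linarith

lemma cf_deriv_nonpos {M c l y : ℝ} (hy0 : 0 < y) (hc : 0 < c) (hcM : c ≤ M)
    (hl0 : 0 < l) (hl1' : l < 1) (hyc : y < c) :
    l - l * y ^ (l - 1) * c ^ (1 - l) - l * (1 - l) * (2 * (y - c) / (2 * M)) ≤ 0 := by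
  have hM : 0 < M := lt_of_lt_of_le hc hcM
  have e1 : (c/y)^(1-l) = y^(l-1) * c^(1-l) := by
    rw [Real.div_rpow hc.le hy0.le, div_eq_mul_inv, ← Real.rpow_neg hy0.le]
    rw [show -(1-l) = l - 1 by ring]; ring
  set v := (c/y)^(1-l) with hv
  set w := (y/c)^(1-l) with hwdef
  have hwpos : 0 < w := rpow_pos_of_pos (div_pos hy0 hc) _
  have hvw : v * w = 1 := by
    rw [hv, hwdef, ← Real.mul_rpow (by positivity) (by positivity)]
    rw [show (c/y)*(y/c) = 1 by field_simp]
    exact Real.one_rpow _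
  have hber : w ≤ 1 + (1-l)*(y/c - 1) := by
    have h := rpow_one_add_le_one_add_mul_self (s := y/c - 1) (p := 1-l)
      (by have : 0 < y/c := div_pos hy0 hc; linarith) (by linarith) (by linarith)
    simpa [hwdef] using h
  have e2 : y/c - 1 = -((c-y)/c) := by field_simp; ring
  rw [e2] at hber
  have hz0 : 0 ≤ (1-l)*((c-y)/c) := by
    apply mul_nonneg (by linarith)
    apply div_nonneg (by linarith) hc.le
  have hkey : 1 + (1-l)*((c-y)/c) ≤ v := by
    nlinarith [mul_le_mul_of_nonneg_left hber (by linarith : (0:ℝ) ≤ 1 + (1-l)*((c-y)/c)),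
      hvw, hwpos, sq_nonneg ((1-l)*((c-y)/c))]
  have h1 : (c - y)/M ≤ (c - y)/c := by gcongr <;> linarith
  have e4 : 2 * (y - c) / (2 * M) = (y-c)/M := by
    rw [mul_div_mul_left _ _ (two_ne_zero)]
  rw [e4]
  have e1' : l * y ^ (l - 1) * c ^ (1 - l) = l * v := by rw [e1]; ring
  rw [e1']
  have hkl := mul_le_mul_of_nonneg_left hkey hl0.le
  have h1l := mul_le_mul_of_nonneg_left h1 (by nlinarith : (0:ℝ) ≤ l*(1-l))
  have e5 : (y-c)/M = -((c-y)/M) := by ring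
  rw [e5]
  linarith

/-- Cartwright–Field two-variable weighted inequality. -/
lemma cf_two_var {M a c l : ℝ} (ha : 0 < a) (haM : a ≤ M) (hc : 0 < c) (hcM : c ≤ M)
    (hl : 0 ≤ l) (hl1 : l ≤ 1) :
    l*(1-l)*(a-c)^2/(2*M) ≤ l*a + (1-l)*c - a^l * c^(1-l) := by
  have hM : 0 < M := lt_of_lt_of_le ha haM
  rcases eq_or_lt_of_le hl with rfl | hl0
  · simp [Real.rpow_zero]
  rcases eq_or_lt_of_le hl1 with rfl | hl1'
  · simp [Real.rpow_zero, Real.rpow_one]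
  set F : ℝ → ℝ := fun y => l*y + (1-l)*c - y^l * c^(1-l) - l*(1-l)*((y-c)^2/(2*M)) with hF
  have hFc : F c = 0 := by
    have h : c^l * c^(1-l) = c := by
      rw [← Real.rpow_add hc]; simp
    simp [hF, h]; ring
  have key : 0 ≤ F a := by
    rcases le_total c a with hca | hac
    · have mono : MonotoneOn F (Set.Icc c M) := by
        apply monotoneOn_of_deriv_nonneg (convex_Icc c M)
        · intro y hy
          exact (cf_hasDeriv l c M (ne_of_gt (lt_of_lt_of_le hc hy.1))).continuousAt.continuousWithinAt
        · intro y hy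
          rw [interior_Icc] at hy
          exact (cf_hasDeriv l c M (ne_of_gt (lt_trans hc hy.1))).differentiableAt.differentiableWithinAt
        · intro y hy
          rw [interior_Icc] at hy
          rw [(cf_hasDeriv l c M (ne_of_gt (lt_trans hc hy.1))).deriv]
          exact cf_deriv_nonneg hc hl0 hl1' hy.1 hy.2.le
      have h := mono (Set.mem_Icc.2 ⟨le_refl c, hcM⟩) (Set.mem_Icc.2 ⟨hca, haM⟩) hca
      linarith [hFc ▸ h]
    · have anti : AntitoneOn F (Set.Icc a c) := by
        apply antitoneOn_of_deriv_nonpos (convex_Icc a c)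
        · intro y hy
          exact (cf_hasDeriv l c M (ne_of_gt (lt_of_lt_of_le ha hy.1))).continuousAt.continuousWithinAt
        · intro y hy
          rw [interior_Icc] at hy
          exact (cf_hasDeriv l c M (ne_of_gt (lt_trans ha hy.1))).differentiableAt.differentiableWithinAt
        · intro y hy
          rw [interior_Icc] at hy
          rw [(cf_hasDeriv l c M (ne_of_gt (lt_trans ha hy.1))).deriv]
          exact cf_deriv_nonpos (lt_trans ha hy.1) hc hcM hl0 hl1' hy.2
      have h := anti (Set.mem_Icc.2 ⟨le_refl a, hac⟩) (Set.mem_Icc.2 ⟨hac, le_refl c⟩) hac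
      linarith [hFc ▸ h]
  simpa [hF, mul_div_assoc] using key


lemma cf_main {ι : Type*} [DecidableEq ι] (b : ℝ) (hb0 : 0 < b) :
    ∀ (m : ℕ) (s : Finset ι) (x : ι → ℝ), s.card = m → s.Nonempty →
      (∀ i ∈ s, 0 < x i) → (∀ i ∈ s, x i ≤ b) →
      (1/(2*b)) * ((∑ i ∈ s, (x i)^2)/m - ((∑ i ∈ s, x i)/m)^2) ≤
        (∑ i ∈ s, x i)/m - (∏ i ∈ s, x i)^((1:ℝ)/m) := by
  intro m
  induction m with
  | zero =>
    intro s x hcard hne _ _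
    exact absurd (Finset.card_eq_zero.1 hcard) hne.ne_empty
  | succ m ih =>
    intro s x hcard hne hpos hle
    rcases Nat.eq_zero_or_pos m with rfl | hm
    · obtain ⟨i, rfl⟩ := Finset.card_eq_one.1 hcard
      simp [Real.rpow_one]
    · -- inductive step
      obtain ⟨i₀, hi₀, hmax⟩ := Finset.exists_max_image s x hne
      have hcard' : (s.erase i₀).card = m := by
        rw [Finset.card_erase_of_mem hi₀, hcard]; rfl
      have hne' : (s.erase i₀).Nonempty := Finset.card_pos.1 (by rw [hcard']; exact hm)
      have hpos' : ∀ i ∈ s.erase i₀, 0 < x i := fun i hi => hpos i (Finset.mem_of_mem_erase hi)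
      have hle' : ∀ i ∈ s.erase i₀, x i ≤ b := fun i hi => hle i (Finset.mem_of_mem_erase hi)
      have IH := ih (s.erase i₀) x hcard' hne' hpos' hle'
      set S' := ∑ i ∈ s.erase i₀, x i with hS'
      set Q' := ∑ i ∈ s.erase i₀, (x i)^2 with hQ'
      set P' := ∏ i ∈ s.erase i₀, x i with hP'
      set t := x i₀ with ht
      set mR := (m : ℝ) with hmR
      have hm1 : (0:ℝ) < mR := by rw [hmR]; exact_mod_cast hm
      have hm2 : (0:ℝ) < mR + 1 := by linarith
      have htpos : 0 < t := hpos i₀ hi₀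
      have htb : t ≤ b := hle i₀ hi₀
      have hS'pos : 0 < S' := Finset.sum_pos hpos' hne'
      have hP'pos : 0 < P' := Finset.prod_pos hpos'
      set A' := S'/mR with hA'
      set G' := P'^((1:ℝ)/mR) with hG'
      set l := mR/(mR+1) with hl
      have hl0 : 0 < l := by positivity
      have hl1 : l < 1 := by rw [hl, div_lt_one hm2]; linarith
      have hA'pos : 0 < A' := by positivity
      have hG'pos : 0 < G' := Real.rpow_pos_of_pos hP'pos _
      have hmt : S' ≤ mR * t := by
        have h := Finset.sum_le_card_nsmul (s.erase i₀) x t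
          (fun i hi => hmax i (Finset.mem_of_mem_erase hi))
        rw [hcard'] at h
        simpa [nsmul_eq_mul] using h
      have hA't : A' ≤ t := by rw [hA', div_le_iff₀ hm1]; linarith
      have hA'b : A' ≤ b := le_trans hA't htb
      -- variance of the smaller set is nonneg
      have hvar : S'^2 ≤ mR * Q' := by
        have h := sq_sum_le_card_mul_sum_sq (s := s.erase i₀) (f := x)
        rw [hcard'] at h
        exact_mod_cast h
      have hIH0 : 0 ≤ (1/(2*b))*(Q'/mR - (S'/mR)^2) := by
        apply mul_nonneg (by positivity)
        rw [sub_nonneg, div_pow, div_le_div_iff₀ (by positivity) hm1]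
        nlinarith
      have hAmG : 0 ≤ A' - G' := by
        rw [hA', hG']
        calc (0:ℝ) ≤ (1/(2*b))*(Q'/mR - (S'/mR)^2) := hIH0
        _ ≤ S'/mR - P'^((1:ℝ)/mR) := IH
      -- two-variable inequality
      have two := cf_two_var hA'pos hA'b htpos htb hl0.le hl1.le
      -- Bernoulli piece
      set r := G'/A' with hr
      have hrpos : 0 < r := by positivity
      have hr1 : r ≤ 1 := by rw [hr, div_le_one hA'pos]; linarith
      have hber : r^l ≤ 1 + l*(r - 1) := by
        have h := rpow_one_add_le_one_add_mul_self (s := r - 1) (p := l)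
          (by linarith) hl0.le hl1.le
        simpa using h
      have hfac : A' ≤ t^(1-l) * A'^l := by
        have h1 : A'^(1-l) ≤ t^(1-l) := Real.rpow_le_rpow hA'pos.le hA't (by linarith)
        have h2 : A'^(1-l) * A'^l = A' := by
          rw [← Real.rpow_add hA'pos]; norm_num
        calc A' = A'^(1-l) * A'^l := h2.symm
        _ ≤ t^(1-l) * A'^l := mul_le_mul_of_nonneg_right h1 (by positivity)
      have claim2 : l*(A' - G') ≤ t^(1-l) * (A'^l - G'^l) := by
        have hrA : r * A' = G' := div_mul_cancel₀ _ hA'pos.ne'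
        have hGl : G'^l = r^l * A'^l := by
          rw [← hrA, Real.mul_rpow hrpos.le hA'pos.le]
        have hrl1 : r^l ≤ 1 := Real.rpow_le_one hrpos.le hr1 hl0.le
        have s1 : A' * (l*(1-r)) ≤ A' * (1 - r^l) :=
          mul_le_mul_of_nonneg_left (by linarith) hA'pos.le
        have s2 : A' * (1 - r^l) ≤ (t^(1-l)*A'^l) * (1 - r^l) :=
          mul_le_mul_of_nonneg_right hfac (by linarith)
        calc l*(A'-G') = A' * (l*(1-r)) := by rw [← hrA]; ring
        _ ≤ (t^(1-l)*A'^l) * (1-r^l) := le_trans s1 s2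
        _ = t^(1-l) * (A'^l - G'^l) := by rw [hGl]; ring
      -- decompose sums over s
      have hsum : ∑ i ∈ s, x i = S' + t := (Finset.sum_erase_add s x hi₀).symm
      have hsumsq : ∑ i ∈ s, (x i)^2 = Q' + t^2 := (Finset.sum_erase_add s _ hi₀).symm
      have hprod : ∏ i ∈ s, x i = P' * t := (Finset.prod_erase_mul s x hi₀).symm
      have hcast : ((m+1 : ℕ) : ℝ) = mR + 1 := by push_cast; ring
      have hGdef : (∏ i ∈ s, x i)^((1:ℝ)/(mR+1)) = G'^l * t^(1-l) := by
        rw [hprod, Real.mul_rpow hP'pos.le htpos.le]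
        congr 1
        · rw [hG', ← Real.rpow_mul hP'pos.le]
          congr 1
          rw [hl]; field_simp
        · congr 1
          rw [hl]; field_simp; ring
      rw [hsum, hsumsq, hcast, hGdef]
      have hAeq : (S'+t)/(mR+1) = l*A' + (1-l)*t := by
        rw [hA', hl]; field_simp; ring
      have hLeq : 1/(2*b) * ((Q'+t^2)/(mR+1) - ((S'+t)/(mR+1))^2)
          = l*(1-l)*(A'-t)^2/(2*b) + l*((1/(2*b))*(Q'/mR - A'^2)) := by
        rw [hA', hl]; field_simp; ring
      rw [hLeq, hAeq]
      have hsplit : l*A'+(1-l)*t - G'^l*t^(1-l)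
          = (l*A'+(1-l)*t - A'^l*t^(1-l)) + t^(1-l)*(A'^l - G'^l) := by ring
      linarith [two, claim2, mul_le_mul_of_nonneg_left IH hl0.le]

theorem stmt_6 (n : ℕ) (hn : 1 ≤ n) (x : Fin n → ℝ) (hx : ∀ i, 0 < x i)
    (b : ℝ) (hb : ∀ i, x i ≤ b) (hb' : ∃ i, x i = b) :
    (∑ i, x i) / n - (∏ i, x i) ^ ((1 : ℝ) / n) ≥
      (1 / (2 * b)) * ((∑ i, x i ^ 2) / n - ((∑ i, x i) / n) ^ 2) := by
  have hb0 : 0 < b := by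
    obtain ⟨i, hi⟩ := hb'
    rw [← hi]; exact hx i
  have hne : Nonempty (Fin n) := ⟨⟨0, hn⟩⟩
  have h := cf_main b hb0 n Finset.univ x (by simp) Finset.univ_nonempty
    (fun i _ => hx i) (fun i _ => hb i)
  exact h
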